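/- Let q be an odd prime power. If D(q; m₁, n₁) ≅ D(q; m₂, n₂), then gcd(m₁ − n₁, q−1) = gcd(m₂ − n₂, q−1). -/

import Mathlib

/-- The arc relation of the monomial digraph `D(q; m, n)`. -/
def monArc {F : Type*} [Field F] (m n : ℕ) (u v : F × F) : Prop :=
  u.2 + v.2 = u.1 ^ m * v.1 ^ n

instance monArc.decidable {F : Type*} [Field F] [DecidableEq F] (m n : ℕ) (u v : F × F) :
    Decidable (monArc m n u v) := by unfold monArc; infer_instance

namespace MonArcAux
open Finset

lemma card_pow_eq_one_of_dvd {G : Type*} [Group G] [Fintype G] [IsCyclic G] [DecidableEq G]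
    {d : ℕ} (hd : d ∣ Fintype.card G) (hd0 : d ≠ 0) :
    #(univ.filter fun g : G => g ^ d = 1) = d := by
  rw [← sum_card_orderOf_eq_card_pow_eq_one hd0]
  calc ∑ m ∈ d.divisors, #(univ.filter fun a : G => orderOf a = m)
      = ∑ m ∈ d.divisors, m.totient :=
        Finset.sum_congr rfl fun m hm =>
          IsCyclic.card_orderOf_eq_totient ((Nat.mem_divisors.mp hm).1.trans hd)
    _ = d := Nat.sum_totient d

lemma card_pow_eq_one_gcd {G : Type*} [Group G] [Fintype G] [IsCyclic G] [DecidableEq G]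
    (k : ℕ) :
    #(univ.filter fun g : G => g ^ k = 1) = Nat.gcd k (Fintype.card G) := by
  have hcard : 0 < Fintype.card G := Fintype.card_pos
  have hset : (univ.filter fun g : G => g ^ k = 1) =
      (univ.filter fun g : G => g ^ Nat.gcd k (Fintype.card G) = 1) := by
    ext g
    simp only [mem_filter, mem_univ, true_and, ← orderOf_dvd_iff_pow_eq_one, Nat.dvd_gcd_iff]
    exact ⟨fun h => ⟨h, orderOf_dvd_card⟩, fun h => h.1⟩
  rw [hset, card_pow_eq_one_of_dvd (Nat.gcd_dvd_right _ _)
    (Nat.gcd_ne_zero_right hcard.ne')]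

variable {F : Type*} [Field F] [Fintype F] [DecidableEq F]

omit [Fintype F] [DecidableEq F] in
lemma cond_iff_pow (n k : ℕ) {x y : F} (hx : x ≠ 0) (hy : y ≠ 0) :
    x ^ (n + k) * y ^ n = y ^ (n + k) * x ^ n ↔ x ^ k = y ^ k := by
  constructor
  · intro h
    have hne : x ^ n * y ^ n ≠ 0 := mul_ne_zero (pow_ne_zero _ hx) (pow_ne_zero _ hy)
    apply mul_right_cancel₀ hne
    linear_combination h
  · intro h; linear_combination (x ^ n * y ^ n) * h

lemma card_roots_ne_zero' (k : ℕ) :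
    #(univ.filter fun x : F => x ≠ 0 ∧ x ^ k = 1) = Nat.gcd k (Fintype.card F - 1) := by
  have h : #(univ.filter fun z : Fˣ => z ^ k = 1)
      = #(univ.filter fun x : F => x ≠ 0 ∧ x ^ k = 1) := by
    refine Finset.card_bij (fun z _ => (z : F)) ?_ ?_ ?_
    · intro z hz
      simp only [mem_filter, mem_univ, true_and] at hz ⊢
      exact ⟨z.ne_zero, by rw [← Units.val_pow_eq_pow_val, hz, Units.val_one]⟩
    · intro a _ b _ h; exact Units.ext h
    · intro x hx
      simp only [mem_filter, mem_univ, true_and] at hx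
      refine ⟨Units.mk0 x hx.1, ?_, rfl⟩
      simp only [mem_filter, mem_univ, true_and, Units.ext_iff, Units.val_pow_eq_pow_val,
        Units.val_mk0, Units.val_one, hx.2]
  calc #(univ.filter fun x : F => x ≠ 0 ∧ x ^ k = 1)
      = #(univ.filter fun z : Fˣ => z ^ k = 1) := h.symm
    _ = Nat.gcd k (Fintype.card Fˣ) := card_pow_eq_one_gcd k
    _ = Nat.gcd k (Fintype.card F - 1) := by rw [Fintype.card_units]

lemma count_T (n k : ℕ) (hn : 1 ≤ n) :
    #(univ.filter fun p : F × F => p.1 ^ (n + k) * p.2 ^ n = p.2 ^ (n + k) * p.1 ^ n)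
      = (Fintype.card F ^ 2 - (Fintype.card F - 1) ^ 2)
        + Nat.gcd k (Fintype.card F - 1) * (Fintype.card F - 1) := by
  set q := Fintype.card F with hq
  set P : F × F → Prop := fun p => p.1 ^ (n + k) * p.2 ^ n = p.2 ^ (n + k) * p.1 ^ n with hP
  have hsplit := Finset.card_filter_add_card_filter_not
    (s := univ.filter P) (fun p : F × F => p.1 = 0 ∨ p.2 = 0)
  rw [Finset.filter_filter, Finset.filter_filter] at hsplit
  have hzero : (univ.filter fun p : F × F => P p ∧ (p.1 = 0 ∨ p.2 = 0))
      = univ.filter (fun p : F × F => p.1 = 0 ∨ p.2 = 0) := by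
    ext p
    simp only [mem_filter, mem_univ, true_and]
    refine ⟨fun h => h.2, fun hz => ⟨?_, hz⟩⟩
    have hn' : n ≠ 0 := by omega
    have hnk : n + k ≠ 0 := by omega
    rcases hz with h | h <;> simp [hP, h, zero_pow hn', zero_pow hnk]
  have hcompl : #(univ.filter fun p : F × F => ¬(p.1 = 0 ∨ p.2 = 0)) = (q - 1) ^ 2 := by
    have he : (univ.filter fun p : F × F => ¬(p.1 = 0 ∨ p.2 = 0))
        = (univ.filter fun x : F => ¬(x = 0)) ×ˢ (univ.filter fun y : F => ¬(y = 0)) := by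
      ext p; simp [Finset.mem_product, not_or]
    have hne : #(univ.filter fun x : F => ¬(x = 0)) = q - 1 := by
      rw [show (univ.filter fun x : F => ¬(x = 0)) = univ.erase 0 by
        ext x; simp [Finset.mem_erase]]
      rw [Finset.card_erase_of_mem (mem_univ 0), Finset.card_univ]
    rw [he, Finset.card_product, hne, sq]
  have huniv : #(univ : Finset (F × F)) = q ^ 2 := by
    rw [Finset.card_univ, Fintype.card_prod, sq]
  have hzcard' : #(univ.filter fun p : F × F => p.1 = 0 ∨ p.2 = 0) = q ^ 2 - (q-1) ^ 2 := by
    have h2 := Finset.card_filter_add_card_filter_not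
      (s := (univ : Finset (F × F))) (fun p : F × F => p.1 = 0 ∨ p.2 = 0)
    omega
  have hB : #(univ.filter fun p : F × F => P p ∧ ¬(p.1 = 0 ∨ p.2 = 0))
      = Nat.gcd k (q - 1) * (q - 1) := by
    have htgt : #(univ.filter fun r : F × F => (r.1 ≠ 0 ∧ r.1 ^ k = 1) ∧ r.2 ≠ 0)
        = Nat.gcd k (q - 1) * (q - 1) := by
      have he : (univ.filter fun r : F × F => (r.1 ≠ 0 ∧ r.1 ^ k = 1) ∧ r.2 ≠ 0)
          = (univ.filter fun x : F => x ≠ 0 ∧ x ^ k = 1) ×ˢ (univ.filter fun y : F => y ≠ 0) := by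
        ext p; simp [Finset.mem_product, and_assoc]
      have hne : #(univ.filter fun y : F => y ≠ 0) = q - 1 := by
        rw [show (univ.filter fun y : F => y ≠ 0) = univ.erase 0 by
          ext x; simp [Finset.mem_erase]]
        rw [Finset.card_erase_of_mem (mem_univ 0), Finset.card_univ]
      rw [he, Finset.card_product, card_roots_ne_zero', hne]
    rw [← htgt]
    refine Finset.card_nbij' (fun p => (p.1 * p.2⁻¹, p.2)) (fun r => (r.1 * r.2, r.2))
      ?_ ?_ ?_ ?_
    · intro p hp
      simp only [Finset.mem_coe, mem_filter, mem_univ, true_and, not_or] at hp ⊢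
      obtain ⟨hPp, hx, hy⟩ := hp
      have h1 : p.1 ^ k = p.2 ^ k := (cond_iff_pow n k hx hy).1 hPp
      refine ⟨⟨mul_ne_zero hx (inv_ne_zero hy), ?_⟩, hy⟩
      rw [mul_pow, h1, inv_pow, mul_inv_cancel₀ (pow_ne_zero _ hy)]
    · intro r hr
      simp only [Finset.mem_coe, mem_filter, mem_univ, true_and, not_or] at hr ⊢
      obtain ⟨⟨hz, hzk⟩, hy⟩ := hr
      have hx : r.1 * r.2 ≠ 0 := mul_ne_zero hz hy
      refine ⟨(cond_iff_pow n k hx hy).2 (by rw [mul_pow, hzk, one_mul]), hx, hy⟩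
    · intro p hp
      simp only [Finset.mem_coe, mem_filter, mem_univ, true_and, not_or] at hp
      exact Prod.ext (inv_mul_cancel_right₀ hp.2.2 p.1) rfl
    · intro r hr
      simp only [Finset.mem_coe, mem_filter, mem_univ, true_and, not_or] at hr
      exact Prod.ext (mul_inv_cancel_right₀ hr.2 r.1) rfl
  rw [hzero] at hsplit
  rw [hzcard'] at hsplit
  rw [hB] at hsplit
  exact hsplit.symm

lemma T_symm (m n : ℕ) :
    (univ.filter fun p : F × F => p.1 ^ m * p.2 ^ n = p.2 ^ m * p.1 ^ n)
      = (univ.filter fun p : F × F => p.1 ^ n * p.2 ^ m = p.2 ^ n * p.1 ^ m) := by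
  ext p
  simp only [mem_filter, mem_univ, true_and]
  constructor <;> intro h <;> linear_combination -h

lemma count_S (m n : ℕ) :
    #(univ.filter fun p : (F × F) × (F × F) => monArc m n p.1 p.2 ∧ monArc m n p.2 p.1)
      = #(univ.filter fun p : F × F => p.1 ^ m * p.2 ^ n = p.2 ^ m * p.1 ^ n)
          * Fintype.card F := by
  rw [← Finset.card_univ (α := F), ← Finset.card_product]
  refine Finset.card_nbij' (fun p => ((p.1.1, p.2.1), p.1.2))
    (fun t => ((t.1.1, t.2), (t.1.2, t.1.1 ^ m * t.1.2 ^ n - t.2))) ?_ ?_ ?_ ?_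
  · intro p hp
    simp only [Finset.mem_coe, mem_filter, Finset.mem_product] at hp ⊢
    simp only [Finset.mem_coe, mem_filter, mem_univ, true_and, and_true, monArc, Finset.mem_product] at hp ⊢
    obtain ⟨h1, h2⟩ := hp
    linear_combination h2 - h1
  · intro t ht
    simp only [Finset.mem_coe, Finset.mem_product, mem_filter, mem_univ, true_and] at ht
    simp only [Finset.mem_coe, mem_filter]
    simp only [Finset.mem_coe, mem_filter, mem_univ, true_and, monArc]
    exact ⟨by ring, by linear_combination ht.1⟩
  · intro p hp
    simp only [Finset.mem_coe, mem_filter] at hp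
    simp only [Finset.mem_coe, mem_filter, mem_univ, true_and, monArc] at hp
    have : p.2.2 = p.1.1 ^ m * p.2.1 ^ n - p.1.2 := by linear_combination hp.1
    exact Prod.ext (Prod.ext rfl rfl) (Prod.ext rfl this.symm)
  · intro t ht
    exact Prod.ext (Prod.ext rfl rfl) rfl

end MonArcAux

open Finset MonArcAux in
/-- For `q` odd, if `D(q; m₁,n₁) ≅ D(q; m₂,n₂)` then
`gcd(m₁−n₁, q−1) = gcd(m₂−n₂, q−1)`. -/
theorem stmt_16 {F : Type*} [Field F] [Fintype F] (q : ℕ) (hq : Fintype.card F = q)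
    (hodd : Odd q) (m₁ n₁ m₂ n₂ : ℕ)
    (hm₁ : 1 ≤ m₁ ∧ m₁ ≤ q - 1) (hn₁ : 1 ≤ n₁ ∧ n₁ ≤ q - 1)
    (hm₂ : 1 ≤ m₂ ∧ m₂ ≤ q - 1) (hn₂ : 1 ≤ n₂ ∧ n₂ ≤ q - 1)
    (φ : (F × F) ≃ (F × F))
    (hiso : ∀ u v : F × F, monArc m₁ n₁ u v ↔ monArc m₂ n₂ (φ u) (φ v)) :
    Int.gcd ((m₁ : ℤ) - n₁) (q - 1) = Int.gcd ((m₂ : ℤ) - n₂) (q - 1) := by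
  classical
  have hq2 : 2 ≤ q := hq ▸ Fintype.one_lt_card
  have key : ∀ m n : ℕ, 1 ≤ m → 1 ≤ n →
      #(univ.filter fun p : F × F => p.1 ^ m * p.2 ^ n = p.2 ^ m * p.1 ^ n)
        = (q ^ 2 - (q - 1) ^ 2) + Int.gcd ((m : ℤ) - n) ((q : ℤ) - 1) * (q - 1) := by
    intro m n hm hn
    have castgcd : ∀ a b : ℕ, b ≤ a →
        Nat.gcd (a - b) (q - 1) = Int.gcd ((a : ℤ) - b) ((q : ℤ) - 1) := by
      intro a b hba
      have h1 : (a : ℤ) - b = ((a - b : ℕ) : ℤ) := by omega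
      have h2 : (q : ℤ) - 1 = ((q - 1 : ℕ) : ℤ) := by omega
      rw [h1, h2, Int.gcd_natCast_natCast]
    rcases le_total n m with h | h
    · have hc := count_T (F := F) n (m - n) hn
      rw [show n + (m - n) = m by omega, hq] at hc
      rw [hc, castgcd m n h]
    · have hc := count_T (F := F) m (n - m) hm
      rw [show m + (n - m) = n by omega, hq] at hc
      have hsymm : #(univ.filter fun p : F × F => p.1 ^ m * p.2 ^ n = p.2 ^ m * p.1 ^ n)
          = #(univ.filter fun p : F × F => p.1 ^ n * p.2 ^ m = p.2 ^ n * p.1 ^ m) := by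
        congr 1
        ext p
        simp only [mem_filter, mem_univ, true_and]
        constructor <;> intro h2 <;> linear_combination -h2
      rw [hsymm, hc, castgcd n m h]
      rw [show ((m : ℤ) - n) = -((n : ℤ) - m) by ring, Int.neg_gcd]
  have hS : #(univ.filter fun p : (F × F) × (F × F) =>
        monArc m₁ n₁ p.1 p.2 ∧ monArc m₁ n₁ p.2 p.1)
      = #(univ.filter fun p : (F × F) × (F × F) =>
        monArc m₂ n₂ p.1 p.2 ∧ monArc m₂ n₂ p.2 p.1) := by
    refine Finset.card_nbij' (fun p => (φ p.1, φ p.2)) (fun p => (φ.symm p.1, φ.symm p.2))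
      ?_ ?_ ?_ ?_
    · intro p hp
      simp only [Finset.mem_coe, mem_filter, mem_univ, true_and] at hp ⊢
      exact ⟨(hiso p.1 p.2).1 hp.1, (hiso p.2 p.1).1 hp.2⟩
    · intro p hp
      simp only [Finset.mem_coe, mem_filter, mem_univ, true_and] at hp ⊢
      constructor
      · have := (hiso (φ.symm p.1) (φ.symm p.2)).2
        simp only [Equiv.apply_symm_apply] at this
        exact this hp.1
      · have := (hiso (φ.symm p.2) (φ.symm p.1)).2
        simp only [Equiv.apply_symm_apply] at this
        exact this hp.2
    · intro p _; simp
    · intro p _; simp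
  rw [count_S m₁ n₁, count_S m₂ n₂, key m₁ n₁ hm₁.1 hn₁.1, key m₂ n₂ hm₂.1 hn₂.1, hq] at hS
  have h1 := Nat.eq_of_mul_eq_mul_right (show 0 < q by omega) hS
  have h2 := Nat.add_left_cancel h1
  exact Nat.eq_of_mul_eq_mul_right (show 0 < q - 1 by omega) h2
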